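/- arXiv:2209.13282 — 2 statements merged into one kernel-verified Lean document; each statement's English description precedes it below -/
import Mathlib

section
/- Let A be a finite-dimensional unital algebra with coproduct Δ and counit, and let φ be a left integral on A with antipode S. If S is an anti-isomorphism of A, then ψ := φ ∘ S is a right integral on A with the same antipode S, i.e., S((ψ ⊗ ι)((c ⊗ 1)Δ(a))) = (ψ ⊗ ι)(Δ(c)(a ⊗ 1)) for all a, c ∈ A. -/
open TensorProduct

/-- `(ψ ⊗ ι)` as a map `A ⊗ A → A`. -/
noncomputable def lmapC {A : Type*} [AddCommGroup A] [Module ℂ A]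
    (ψ : A →ₗ[ℂ] ℂ) : A ⊗[ℂ] A →ₗ[ℂ] A :=
  (TensorProduct.lid ℂ A).toLinearMap ∘ₗ TensorProduct.map ψ LinearMap.id

/-- `(ι ⊗ φ)` as a map `A ⊗ A → A`. -/
noncomputable def rmapC {A : Type*} [AddCommGroup A] [Module ℂ A]
    (φ : A →ₗ[ℂ] ℂ) : A ⊗[ℂ] A →ₗ[ℂ] A :=
  (TensorProduct.rid ℂ A).toLinearMap ∘ₗ TensorProduct.map LinearMap.id φ

/-- If `φ` is a left integral on `A` with antipode `S`, and `S` is an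
anti-isomorphism of `A` flipping the coproduct, then `ψ := φ ∘ S` is a right
integral on `A` with the same antipode `S`. -/
theorem comp_antipode_is_right_integral
    {A : Type*} [Ring A] [Algebra ℂ A] [FiniteDimensional ℂ A]
    (Δ : A →ₗ[ℂ] A ⊗[ℂ] A)
    (hcoassoc : ∀ a : A,
      (TensorProduct.assoc ℂ A A A) (TensorProduct.map Δ LinearMap.id (Δ a)) =
        TensorProduct.map LinearMap.id Δ (Δ a))
    (ε : A →ₗ[ℂ] ℂ)
    (hε₁ : ∀ a : A, lmapC ε (Δ a) = a)
    (hε₂ : ∀ a : A, rmapC ε (Δ a) = a)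
    (φ : A →ₗ[ℂ] ℂ)
    (S : A →ₗ[ℂ] A)
    -- φ is a left integral with antipode S
    (hS : ∀ a c : A,
      S (rmapC φ (Δ a * ((1 : A) ⊗ₜ[ℂ] c))) = rmapC φ (((1 : A) ⊗ₜ[ℂ] a) * Δ c))
    -- S is an anti-isomorphism of A flipping the coproduct
    (hSbij : Function.Bijective S)
    (hSanti : ∀ a b : A, S (a * b) = S b * S a)
    (hSflip : ∀ a : A, Δ (S a) = (TensorProduct.comm ℂ A A) (TensorProduct.map S S (Δ a))) :
    ∀ a c : A,
      S (lmapC (φ ∘ₗ S) ((c ⊗ₜ[ℂ] (1 : A)) * Δ a)) =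
        lmapC (φ ∘ₗ S) (Δ c * (a ⊗ₜ[ℂ] (1 : A))) := by

  intro a c
  apply hSbij.injective
  have key1 : ∀ x : A ⊗[ℂ] A,
      S (lmapC (φ ∘ₗ S) ((c ⊗ₜ[ℂ] (1 : A)) * x)) =
        rmapC φ ((TensorProduct.comm ℂ A A) (TensorProduct.map S S x) * ((1 : A) ⊗ₜ[ℂ] S c)) := by
    intro x
    induction x using TensorProduct.induction_on with
    | zero => simp
    | tmul p q =>
        simp [lmapC, rmapC, Algebra.TensorProduct.tmul_mul_tmul, hSanti]
    | add x y hx hy => simp [mul_add, add_mul, map_add, hx, hy]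
  have key2 : ∀ y : A ⊗[ℂ] A,
      rmapC φ (((1 : A) ⊗ₜ[ℂ] S a) * (TensorProduct.comm ℂ A A) (TensorProduct.map S S y)) =
        S (lmapC (φ ∘ₗ S) (y * (a ⊗ₜ[ℂ] (1 : A)))) := by
    intro y
    induction y using TensorProduct.induction_on with
    | zero => simp
    | tmul p q =>
        simp [lmapC, rmapC, Algebra.TensorProduct.tmul_mul_tmul, hSanti]
    | add x y hx hy => simp [mul_add, add_mul, map_add, hx, hy]
  calc S (S (lmapC (φ ∘ₗ S) ((c ⊗ₜ[ℂ] (1 : A)) * Δ a)))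
      = S (rmapC φ (Δ (S a) * ((1 : A) ⊗ₜ[ℂ] S c))) := by rw [key1 (Δ a), ← hSflip a]
    _ = rmapC φ (((1 : A) ⊗ₜ[ℂ] S a) * Δ (S c)) := hS (S a) (S c)
    _ = S (lmapC (φ ∘ₗ S) (Δ c * (a ⊗ₜ[ℂ] (1 : A)))) := by rw [hSflip c, key2]
end

section
/- Let A and B be finite-dimensional unital algebras with a non-degenerate pairing such that the counit ε on B (given by ε(b) = ⟨1_A, b⟩) is an algebra homomorphism. If there exists a faithful linear functional on B, then there exist a non-zero left invariant functional and a non-zero right invariant functional on A. -/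
open TensorProduct

/-- The pairing of `A ⊗ A` with the pair `(b, b')`, i.e. `x ⊗ y ↦ ⟨x,b⟩⟨y,b'⟩`. -/
noncomputable def pairTT {A B : Type*} [AddCommGroup A] [Module ℂ A]
    [AddCommGroup B] [Module ℂ B]
    (β : A →ₗ[ℂ] B →ₗ[ℂ] ℂ) (b b' : B) : A ⊗[ℂ] A →ₗ[ℂ] ℂ :=
  (LinearMap.mul' ℂ ℂ).comp (TensorProduct.map (β.flip b) (β.flip b'))

lemma aux_exists_ker {B : Type*} [AddCommGroup B] [Module ℂ B] [FiniteDimensional ℂ B]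
    (N : Submodule ℂ B) (hN : N ≠ ⊤) (f : B →ₗ[ℂ] Module.Dual ℂ N) :
    ∃ h : B, h ≠ 0 ∧ f h = 0 := by
  have h1 : Module.finrank ℂ (LinearMap.range f) ≤ Module.finrank ℂ N := by
    calc Module.finrank ℂ (LinearMap.range f) ≤ Module.finrank ℂ (Module.Dual ℂ N) :=
          Submodule.finrank_le _
      _ = Module.finrank ℂ N := Subspace.dual_finrank_eq
  have h2 : Module.finrank ℂ N < Module.finrank ℂ B :=
    Submodule.finrank_lt hN
  have h3 := LinearMap.finrank_range_add_finrank_ker f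
  have h4 : 0 < Module.finrank ℂ (LinearMap.ker f) := by omega
  have : Nontrivial (LinearMap.ker f) := Module.finrank_pos_iff.mp h4
  obtain ⟨⟨h, hmem⟩, hne⟩ := exists_ne (0 : LinearMap.ker f)
  refine ⟨h, ?_, hmem⟩
  intro h0
  exact hne (Subtype.ext h0)

lemma aux_rmap {A B : Type*} [AddCommGroup A] [Module ℂ A]
    [AddCommGroup B] [Module ℂ B]
    (β : A →ₗ[ℂ] B →ₗ[ℂ] ℂ) (h b : B) (x : A ⊗[ℂ] A) :
    β (rmapC (β.flip h) x) b = pairTT β b h x := by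
  induction x using TensorProduct.induction_on with
  | zero => simp
  | tmul x y => simp [rmapC, pairTT, mul_comm]
  | add u v hu hv => simp [map_add, hu, hv]

lemma aux_lmap {A B : Type*} [AddCommGroup A] [Module ℂ A]
    [AddCommGroup B] [Module ℂ B]
    (β : A →ₗ[ℂ] B →ₗ[ℂ] ℂ) (k b : B) (x : A ⊗[ℂ] A) :
    β (lmapC (β.flip k) x) b = pairTT β k b x := by
  induction x using TensorProduct.induction_on with
  | zero => simp
  | tmul x y => simp [lmapC, pairTT, mul_comm]
  | add u v hu hv => simp [map_add, hu, hv]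

/-- Let `A`, `B` be finite-dimensional unital ℂ-algebras with a
non-degenerate pairing inducing the coproduct `Δ` on `A`, and suppose the counit
`ε_B = ⟨1, ·⟩` on `B` is a (unital) algebra homomorphism. If there is a faithful
linear functional on `B`, then there exist a non-zero left invariant functional
and a non-zero right invariant functional on `A`. -/
theorem exists_invariant_functionals_of_faithful_on_dual
    {A B : Type*} [Ring A] [Algebra ℂ A] [FiniteDimensional ℂ A]
    [Ring B] [Algebra ℂ B] [FiniteDimensional ℂ B]
    (β : A →ₗ[ℂ] B →ₗ[ℂ] ℂ)
    (hβA : ∀ a : A, (∀ b : B, β a b = 0) → a = 0)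
    (hβB : ∀ b : B, (∀ a : A, β a b = 0) → b = 0)
    (Δ : A →ₗ[ℂ] A ⊗[ℂ] A)
    (hΔ : ∀ (a : A) (b b' : B), pairTT β b b' (Δ a) = β a (b * b'))
    (hεhom : ∀ b b' : B, β 1 (b * b') = β 1 b * β 1 b')
    (hεone : β (1 : A) (1 : B) = 1)
    (ω : B →ₗ[ℂ] ℂ)
    (hω₁ : ∀ b : B, (∀ c : B, ω (b * c) = 0) → b = 0)
    (hω₂ : ∀ c : B, (∀ b : B, ω (b * c) = 0) → c = 0) :
    (∃ φ : A →ₗ[ℂ] ℂ, φ ≠ 0 ∧ ∀ a : A, rmapC φ (Δ a) = φ a • (1 : A)) ∧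
    (∃ ψ : A →ₗ[ℂ] ℂ, ψ ≠ 0 ∧ ∀ a : A, lmapC ψ (Δ a) = ψ a • (1 : A)) := by
  set ε : B →ₗ[ℂ] ℂ := β 1 with hεdef
  set N : Submodule ℂ B := LinearMap.ker ε with hNdef
  have hNtop : N ≠ ⊤ := by
    intro htop
    have h1 : (1 : B) ∈ N := htop ▸ Submodule.mem_top
    rw [hNdef, LinearMap.mem_ker] at h1
    rw [show ε (1:B) = β 1 1 from rfl, hεone] at h1
    exact one_ne_zero h1
  have hsubN : ∀ b : B, b - ε b • 1 ∈ N := by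
    intro b
    rw [hNdef, LinearMap.mem_ker, map_sub, map_smul]
    rw [show ε (1:B) = β 1 1 from rfl, hεone]
    simp
  set Bform : B →ₗ[ℂ] B →ₗ[ℂ] ℂ := (LinearMap.mul ℂ B).compr₂ ω with hBf
  have hBform : ∀ b c : B, Bform b c = ω (b * c) := fun _ _ => rfl
  constructor
  · -- right-invariant part: need h with b*h = ε b • h
    set f : B →ₗ[ℂ] Module.Dual ℂ N :=
      (LinearMap.lcomp ℂ ℂ N.subtype) ∘ₗ Bform.flip with hf
    obtain ⟨h, hh0, hfh⟩ := aux_exists_ker N hNtop f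
    have hker : ∀ n ∈ N, ω (n * h) = 0 := by
      intro n hn
      have := congrFun (congrArg DFunLike.coe hfh) ⟨n, hn⟩
      simpa [hf, hBform] using this
    have hann : ∀ n ∈ N, n * h = 0 := by
      intro n hn
      apply hω₂
      intro b
      rw [← mul_assoc]
      exact hker (b * n) (by
        rw [hNdef, LinearMap.mem_ker]
        rw [show ε (b * n) = β 1 (b * n) from rfl, hεhom]
        have : ε n = 0 := LinearMap.mem_ker.mp hn
        rw [show β 1 n = ε n from rfl, this, mul_zero])
    have hbh : ∀ b : B, b * h = ε b • h := by
      intro b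
      have := hann _ (hsubN b)
      rw [sub_mul, smul_mul_assoc, one_mul, sub_eq_zero] at this
      exact this
    refine ⟨β.flip h, ?_, ?_⟩
    · intro h0
      exact hh0 (hβB h (fun a => by
        have := congrFun (congrArg DFunLike.coe h0) a
        simpa using this))
    · intro a
      have key : ∀ b : B, β (rmapC (β.flip h) (Δ a)) b = β ((β.flip h) a • (1:A)) b := by
        intro b
        rw [aux_rmap, hΔ, hbh b, map_smul, map_smul]
        simp only [smul_eq_mul]
        rw [show β (1:A) b = ε b from rfl]
        simp [mul_comm]
        exact Or.inl rfl
      have := hβA (rmapC (β.flip h) (Δ a) - (β.flip h) a • (1:A)) (fun b => by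
        rw [map_sub, LinearMap.sub_apply, key b, sub_self])
      exact sub_eq_zero.mp this
  · -- left-invariant part: need k with k*b = ε b • k
    set g : B →ₗ[ℂ] Module.Dual ℂ N :=
      (LinearMap.lcomp ℂ ℂ N.subtype) ∘ₗ Bform with hg
    obtain ⟨k, hk0, hgk⟩ := aux_exists_ker N hNtop g
    have hker : ∀ n ∈ N, ω (k * n) = 0 := by
      intro n hn
      have := congrFun (congrArg DFunLike.coe hgk) ⟨n, hn⟩
      simpa [hg, hBform] using this
    have hann : ∀ n ∈ N, k * n = 0 := by
      intro n hn
      apply hω₁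
      intro c
      rw [mul_assoc]
      exact hker (n * c) (by
        rw [hNdef, LinearMap.mem_ker]
        rw [show ε (n * c) = β 1 (n * c) from rfl, hεhom]
        have : ε n = 0 := LinearMap.mem_ker.mp hn
        rw [show β 1 n = ε n from rfl, this, zero_mul])
    have hkb : ∀ b : B, k * b = ε b • k := by
      intro b
      have := hann _ (hsubN b)
      rw [mul_sub, mul_smul_comm, mul_one, sub_eq_zero] at this
      exact this
    refine ⟨β.flip k, ?_, ?_⟩
    · intro h0
      exact hk0 (hβB k (fun a => by
        have := congrFun (congrArg DFunLike.coe h0) a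
        simpa using this))
    · intro a
      have key : ∀ b : B, β (lmapC (β.flip k) (Δ a)) b = β ((β.flip k) a • (1:A)) b := by
        intro b
        rw [aux_lmap, hΔ, hkb b, map_smul, map_smul]
        simp only [smul_eq_mul]
        rw [show β (1:A) b = ε b from rfl]
        simp [mul_comm]
        exact Or.inl rfl
      have := hβA (lmapC (β.flip k) (Δ a) - (β.flip k) a • (1:A)) (fun b => by
        rw [map_sub, LinearMap.sub_apply, key b, sub_self])
      exact sub_eq_zero.mp this
end
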